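/- Let n ≥ 3 and a ∈ ℝ. Suppose there exist a SONC s₀, finitely many SONCs s₁,…,s_K, and for each k ∈ [K] a constant c_k ≥ 0, a sign σ_k ∈ {−1,1}, and an index i_k ∈ [n] with ℓ_k(x) = 1 + c_k + σ_k x_{i_k}, such that f_a(x) = s₀(x) + Σ_{k=1}^{K} s_k(x)ℓ_k(x) for every x ∈ {−1,1}ⁿ. Then a ≤ (2ⁿ − 1)/(2^{n−2} − 1). -/

import Mathlib

open MvPolynomial Finset
open scoped Classical

noncomputable section

/-- A circuit polynomial in `n` variables. -/
def IsCircuitPoly (n : ℕ) (f : MvPolynomial (Fin n) ℝ) : Prop :=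
  ∃ (r : ℕ) (α : Fin (r + 1) → (Fin n →₀ ℕ)) (β : Fin n →₀ ℕ)
    (cf : Fin (r + 1) → ℝ) (c : ℝ) (lam : Fin (r + 1) → ℝ),
    r ≤ n ∧
    (∀ j, 0 < cf j) ∧
    (∀ j i, Even (α j i)) ∧
    AffineIndependent ℝ (fun j (i : Fin n) => ((α j i : ℕ) : ℝ)) ∧
    (∀ j, 0 < lam j) ∧ (∑ j, lam j) = 1 ∧
    (∀ i, ((β i : ℕ) : ℝ) = ∑ j, lam j * ((α j i : ℕ) : ℝ)) ∧
    f = (∑ j, monomial (α j) (cf j)) + monomial β c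

/-- A nonnegative circuit polynomial. -/
def IsNNCircuit (n : ℕ) (f : MvPolynomial (Fin n) ℝ) : Prop :=
  IsCircuitPoly n f ∧ ∀ x : Fin n → ℝ, 0 ≤ eval x f

/-- A sum of nonnegative circuit polynomials (no degree bound). -/
def IsSONC (n : ℕ) (f : MvPolynomial (Fin n) ℝ) : Prop :=
  ∃ (k : ℕ) (μ : Fin k → ℝ) (p : Fin k → MvPolynomial (Fin n) ℝ),
    (∀ i, 0 ≤ μ i) ∧ (∀ i, IsNNCircuit n (p i)) ∧
    f = ∑ i, C (μ i) * p i

/-- A SONC built from nonnegative circuit polynomials of degree at most `D`. -/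
def IsSONCOfDeg (n D : ℕ) (f : MvPolynomial (Fin n) ℝ) : Prop :=
  ∃ (k : ℕ) (μ : Fin k → ℝ) (p : Fin k → MvPolynomial (Fin n) ℝ),
    (∀ i, 0 ≤ μ i) ∧ (∀ i, IsNNCircuit n (p i) ∧ (p i).totalDegree ≤ D) ∧
    f = ∑ i, C (μ i) * p i

/-- The SONC cone `C_{n,D}`. -/
def InSONCCone (n D : ℕ) (f : MvPolynomial (Fin n) ℝ) : Prop :=
  f.totalDegree ≤ D ∧ IsSONCOfDeg n D f

/-- The vertex of the boolean hypercube `{−1,1}ⁿ` encoded by `ε : Fin n → Bool`. -/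
def bvtx (n : ℕ) (ε : Fin n → Bool) : Fin n → ℝ :=
  fun j => if ε j then 1 else -1

/-- The polynomial `f_a(x) = (a − 1)·∏_{i=1}^{n} (x_i + 1)/2 + 1`. -/
def fA (n : ℕ) (a : ℝ) : MvPolynomial (Fin n) ℝ :=
  C (a - 1) * (∏ i, C (1 / 2 : ℝ) * (X i + 1)) + 1

def mfun (n : ℕ) (β : Fin n →₀ ℕ) (ε : Fin n → Bool) : ℝ :=
  ∏ j, (if ε j then (1:ℝ) else (-1)^(β j))

lemma mfun_true (n : ℕ) (β : Fin n →₀ ℕ) : mfun n β (fun _ => true) = 1 := by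
  simp [mfun]

lemma mfun_pm (n : ℕ) (β : Fin n →₀ ℕ) (ε : Fin n → Bool) :
    mfun n β ε = 1 ∨ mfun n β ε = -1 := by
  refine Finset.prod_induction _ (fun x => x = 1 ∨ x = -1) ?_ (Or.inl rfl) ?_
  · rintro x y (rfl | rfl) (rfl | rfl) <;> norm_num
  · intro j _
    by_cases h : ε j
    · simp [h]
    · simp only [h, if_false]
      rcases Nat.even_or_odd (β j) with he | ho
      · exact Or.inl he.neg_one_pow
      · exact Or.inr ho.neg_one_pow

lemma update_flip_flip {n : ℕ} (j : Fin n) (ε : Fin n → Bool) :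
    Function.update (Function.update ε j (!ε j)) j (!(Function.update ε j (!ε j)) j) = ε := by
  funext j'
  by_cases h : j' = j
  · subst h; simp
  · simp [Function.update_of_ne h]

lemma mfun_update (n : ℕ) (β : Fin n →₀ ℕ) (j₀ : Fin n) (hodd : Odd (β j₀))
    (ε : Fin n → Bool) :
    mfun n β (Function.update ε j₀ (!ε j₀)) = - mfun n β ε := by
  unfold mfun
  rw [← Finset.mul_prod_erase univ _ (mem_univ j₀), ← Finset.mul_prod_erase univ
    (fun j => (if ε j then (1:ℝ) else (-1)^(β j))) (mem_univ j₀)]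
  have hrest : ∏ j ∈ univ.erase j₀, (if Function.update ε j₀ (!ε j₀) j then (1:ℝ) else (-1)^(β j))
      = ∏ j ∈ univ.erase j₀, (if ε j then (1:ℝ) else (-1)^(β j)) := by
    refine Finset.prod_congr rfl fun j hj => ?_
    rw [Function.update_of_ne (Finset.mem_erase.1 hj).1]
  rw [hrest, Function.update_self, hodd.neg_one_pow]
  cases h : ε j₀ <;> simp [h]

lemma card_slice (n : ℕ) (hn : 1 ≤ n) (i : Fin n) :
    (univ.filter (fun ε : Fin n → Bool => ε i = true)).card = 2^(n-1) := by
  have h2 : 2^n = 2 * 2^(n-1) := by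
    rw [← pow_succ']
    congr 1
    omega
  have hcards : (univ.filter (fun ε : Fin n → Bool => ε i = true)).card
      = (univ.filter (fun ε : Fin n → Bool => ¬ (ε i = true))).card := by
    refine Finset.card_nbij' (fun ε => Function.update ε i (!ε i))
      (fun ε => Function.update ε i (!ε i)) ?_ ?_ ?_ ?_
    · intro ε hε
      simp only [Finset.mem_coe, mem_filter, mem_univ, true_and] at hε ⊢
      simp [hε]
    · intro ε hε
      simp only [Finset.mem_coe, mem_filter, mem_univ, true_and] at hε ⊢
      simp [Bool.not_eq_true] at hε
      simp [hε]
    · intro ε _; exact update_flip_flip i ε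
    · intro ε _; exact update_flip_flip i ε
  have hsum : (univ.filter (fun ε : Fin n → Bool => ε i = true)).card
      + (univ.filter (fun ε : Fin n → Bool => ¬ ε i = true)).card
      = (univ : Finset (Fin n → Bool)).card :=
    Finset.card_filter_add_card_filter_not _
  have hcard : (univ : Finset (Fin n → Bool)).card = 2^n := by
    simp [Finset.card_univ]
  refine Nat.eq_of_mul_eq_mul_left (show 0 < 2 by norm_num) ?_
  rw [two_mul]
  nth_rewrite 2 [hcards]
  rw [hsum, hcard, h2]

lemma card_G (n : ℕ) (hn : 2 ≤ n) (β : Fin n →₀ ℕ) (i : Fin n) :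
    2^(n-2) ≤ (univ.filter (fun ε : Fin n → Bool => ε i = true ∧ mfun n β ε = 1)).card := by
  by_cases hβ : ∃ j, j ≠ i ∧ Odd (β j)
  · obtain ⟨j₀, hj₀i, hodd⟩ := hβ
    have h2 : 2^(n-1) = 2 * 2^(n-2) := by
      rw [← pow_succ']
      congr 1
      omega
    set s := univ.filter (fun ε : Fin n → Bool => ε i = true) with hs
    have hG : univ.filter (fun ε : Fin n → Bool => ε i = true ∧ mfun n β ε = 1)
        = s.filter (fun ε => mfun n β ε = 1) := by
      rw [hs, Finset.filter_filter]
    have hcards : (s.filter (fun ε => mfun n β ε = 1)).card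
        = (s.filter (fun ε => ¬ (mfun n β ε = 1))).card := by
      refine Finset.card_nbij' (fun ε => Function.update ε j₀ (!ε j₀))
        (fun ε => Function.update ε j₀ (!ε j₀)) ?_ ?_ ?_ ?_
      · intro ε hε
        simp only [hs, Finset.mem_coe, mem_filter, mem_univ, true_and] at hε ⊢
        obtain ⟨h1, h2⟩ := hε
        refine ⟨by rw [Function.update_of_ne (Ne.symm hj₀i)]; exact h1, ?_⟩
        rw [mfun_update n β j₀ hodd, h2]; norm_num
      · intro ε hε
        simp only [hs, Finset.mem_coe, mem_filter, mem_univ, true_and] at hε ⊢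
        obtain ⟨h1, h2⟩ := hε
        refine ⟨by rw [Function.update_of_ne (Ne.symm hj₀i)]; exact h1, ?_⟩
        rcases mfun_pm n β ε with hm | hm
        · exact absurd hm h2
        · rw [mfun_update n β j₀ hodd, hm]; norm_num
      · intro ε _; exact update_flip_flip j₀ ε
      · intro ε _; exact update_flip_flip j₀ ε
    have hsum : (s.filter (fun ε => mfun n β ε = 1)).card
        + (s.filter (fun ε => ¬ mfun n β ε = 1)).card = s.card :=
      Finset.card_filter_add_card_filter_not _
    have hscard : s.card = 2^(n-1) := card_slice n (by omega) i
    rw [hG]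
    refine le_of_eq (Nat.eq_of_mul_eq_mul_left (show 0 < 2 by norm_num) ?_).symm
    rw [two_mul]
    nth_rewrite 2 [hcards]
    rw [hsum, hscard, h2]
  · push_neg at hβ
    have hβ' : ∀ j, j ≠ i → Even (β j) := by
      intro j hj
      rcases Nat.even_or_odd (β j) with h | h
      · exact h
      · exact absurd h (hβ j hj)
    have hG : univ.filter (fun ε : Fin n → Bool => ε i = true ∧ mfun n β ε = 1)
        = univ.filter (fun ε : Fin n → Bool => ε i = true) := by
      refine Finset.filter_congr fun ε _ => ?_
      constructor
      · exact fun h => h.1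
      · intro h
        refine ⟨h, ?_⟩
        unfold mfun
        refine Finset.prod_eq_one fun j _ => ?_
        by_cases hji : j = i
        · subst hji; simp [h]
        · by_cases hj : ε j
          · simp [hj]
          · simp [hj, (hβ' j hji).neg_one_pow]
    rw [hG, card_slice n (by omega) i]
    exact Nat.pow_le_pow_right (by norm_num) (by omega)

lemma circuit_eval (n : ℕ) (p : MvPolynomial (Fin n) ℝ) (h : IsCircuitPoly n p) :
    ∃ (S cc : ℝ) (β : Fin n →₀ ℕ), ∀ ε : Fin n → Bool,
      eval (bvtx n ε) p = S + cc * mfun n β ε := by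
  obtain ⟨r, α, β, cf, cc, lam, _, _, hαeven, _, _, _, _, hp⟩ := h
  refine ⟨∑ j, cf j, cc, β, fun ε => ?_⟩
  subst hp
  rw [map_add, map_sum, eval_monomial]
  congr 1
  · refine Finset.sum_congr rfl fun j _ => ?_
    rw [eval_monomial]
    have h1 : (Finsupp.prod (α j) fun i k => bvtx n ε i ^ k) = 1 := by
      rw [Finsupp.prod_fintype _ _ (fun i => pow_zero _)]
      refine Finset.prod_eq_one fun i _ => ?_
      by_cases hε : ε i
      · simp [bvtx, hε]
      · simp only [bvtx, hε, if_false]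
        exact (hαeven j i).neg_one_pow
    rw [h1, mul_one]
  · rw [Finsupp.prod_fintype _ _ (fun i => pow_zero _)]
    congr 1
    unfold mfun
    refine Finset.prod_congr rfl fun i _ => ?_
    by_cases hε : ε i <;> simp [bvtx, hε]

lemma circuit_key (n : ℕ) (hn : 3 ≤ n) (p : MvPolynomial (Fin n) ℝ)
    (hp : IsCircuitPoly n p) (hnn : ∀ x : Fin n → ℝ, 0 ≤ eval x p)
    (ℓ : (Fin n → Bool) → ℝ) (hℓ0 : ∀ ε, 0 ≤ ℓ ε)
    (i : Fin n) (hℓi : ∀ ε, ε i = true → ℓ ε = ℓ (fun _ => true)) :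
    ((2:ℝ)^(n-2) - 1) * (eval (bvtx n (fun _ => true)) p * ℓ (fun _ => true)) ≤
      ∑ ε ∈ (univ : Finset (Fin n → Bool)).erase (fun _ => true),
        eval (bvtx n ε) p * ℓ ε := by
  obtain ⟨S, cc, β, hev⟩ := circuit_eval n p hp
  set e : Fin n → Bool := fun _ => true with he
  set G := univ.filter (fun ε : Fin n → Bool => ε i = true ∧ mfun n β ε = 1) with hG
  have heG : e ∈ G := by
    rw [hG, mem_filter]
    exact ⟨mem_univ _, rfl, mfun_true n β⟩
  have hqe : ∀ ε ∈ G, eval (bvtx n ε) p * ℓ ε = eval (bvtx n e) p * ℓ e := by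
    intro ε hε
    rw [hG, mem_filter] at hε
    rw [hev, hev, hε.2.2, mfun_true, hℓi ε hε.2.1]
  have hterm0 : ∀ ε ∈ (univ : Finset (Fin n → Bool)).erase e,
      0 ≤ eval (bvtx n ε) p * ℓ ε := fun ε _ => mul_nonneg (hnn _) (hℓ0 _)
  have hsub : G.erase e ⊆ (univ : Finset (Fin n → Bool)).erase e := by
    intro ε hε
    rw [mem_erase] at hε ⊢
    exact ⟨hε.1, mem_univ _⟩
  have h1 : ∑ ε ∈ G.erase e, eval (bvtx n ε) p * ℓ ε ≤
      ∑ ε ∈ (univ : Finset (Fin n → Bool)).erase e, eval (bvtx n ε) p * ℓ ε :=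
    Finset.sum_le_sum_of_subset_of_nonneg hsub (fun ε h _ => hterm0 ε h)
  have h2 : ∑ ε ∈ G.erase e, eval (bvtx n ε) p * ℓ ε
      = ((G.erase e).card : ℝ) * (eval (bvtx n e) p * ℓ e) := by
    rw [Finset.sum_congr rfl (fun ε hε => hqe ε (Finset.mem_of_mem_erase hε)),
      Finset.sum_const, nsmul_eq_mul]
  have hcard : 2^(n-2) ≤ G.card := card_G n (by omega) β i
  have hce : (G.erase e).card = G.card - 1 := Finset.card_erase_of_mem heG
  have hpos : 0 ≤ eval (bvtx n e) p * ℓ e := mul_nonneg (hnn _) (hℓ0 _)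
  have hlec : ((2:ℝ)^(n-2) - 1) ≤ ((G.erase e).card : ℝ) := by
    have h1c : 1 ≤ G.card := Finset.card_pos.mpr ⟨e, heG⟩
    have hc : (2:ℝ)^(n-2) ≤ (G.card : ℝ) := by exact_mod_cast hcard
    have hce' : ((G.erase e).card : ℝ) = (G.card : ℝ) - 1 := by
      rw [hce, Nat.cast_sub h1c]
      norm_num
    rw [hce']
    linarith
  calc ((2:ℝ)^(n-2) - 1) * (eval (bvtx n e) p * ℓ e)
      ≤ ((G.erase e).card : ℝ) * (eval (bvtx n e) p * ℓ e) :=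
        mul_le_mul_of_nonneg_right hlec hpos
    _ = _ := h2.symm
    _ ≤ _ := h1

lemma sonc_key (n : ℕ) (hn : 3 ≤ n) (sp : MvPolynomial (Fin n) ℝ)
    (hsp : IsSONC n sp) (ℓ : (Fin n → Bool) → ℝ) (hℓ0 : ∀ ε, 0 ≤ ℓ ε)
    (i : Fin n) (hℓi : ∀ ε, ε i = true → ℓ ε = ℓ (fun _ => true)) :
    ((2:ℝ)^(n-2) - 1) * (eval (bvtx n (fun _ => true)) sp * ℓ (fun _ => true)) ≤
      ∑ ε ∈ (univ : Finset (Fin n → Bool)).erase (fun _ => true),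
        eval (bvtx n ε) sp * ℓ ε := by
  obtain ⟨k, μ, p, hμ, hp, rfl⟩ := hsp
  have hev : ∀ x : Fin n → ℝ,
      eval x (∑ t, C (μ t) * p t) = ∑ t, μ t * eval x (p t) := by
    intro x
    rw [map_sum]
    exact Finset.sum_congr rfl fun t _ => by rw [map_mul, eval_C]
  have key : ∀ t, ((2:ℝ)^(n-2)-1) *
      (eval (bvtx n (fun _ => true)) (p t) * ℓ (fun _ => true))
      ≤ ∑ ε ∈ (univ : Finset (Fin n → Bool)).erase (fun _ => true),
          eval (bvtx n ε) (p t) * ℓ ε :=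
    fun t => circuit_key n hn (p t) (hp t).1 (hp t).2 ℓ hℓ0 i hℓi
  have hL : ((2:ℝ)^(n-2)-1) *
      (eval (bvtx n (fun _ => true)) (∑ t, C (μ t) * p t) * ℓ (fun _ => true))
      = ∑ t, μ t * (((2:ℝ)^(n-2)-1) *
          (eval (bvtx n (fun _ => true)) (p t) * ℓ (fun _ => true))) := by
    rw [hev, Finset.sum_mul, Finset.mul_sum]
    exact Finset.sum_congr rfl fun t _ => by ring
  have hR : ∑ ε ∈ (univ : Finset (Fin n → Bool)).erase (fun _ => true),
        eval (bvtx n ε) (∑ t, C (μ t) * p t) * ℓ ε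
      = ∑ t, μ t * ∑ ε ∈ (univ : Finset (Fin n → Bool)).erase (fun _ => true),
          eval (bvtx n ε) (p t) * ℓ ε := by
    calc ∑ ε ∈ (univ : Finset (Fin n → Bool)).erase (fun _ => true),
          eval (bvtx n ε) (∑ t, C (μ t) * p t) * ℓ ε
        = ∑ ε ∈ (univ : Finset (Fin n → Bool)).erase (fun _ => true),
            ∑ t, μ t * (eval (bvtx n ε) (p t) * ℓ ε) := by
          refine Finset.sum_congr rfl fun ε _ => ?_
          rw [hev, Finset.sum_mul]
          exact Finset.sum_congr rfl fun t _ => by ring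
      _ = ∑ t, ∑ ε ∈ (univ : Finset (Fin n → Bool)).erase (fun _ => true),
            μ t * (eval (bvtx n ε) (p t) * ℓ ε) := Finset.sum_comm
      _ = _ := Finset.sum_congr rfl fun t _ => (Finset.mul_sum _ _ _).symm
  rw [hL, hR]
  exact Finset.sum_le_sum fun t _ => mul_le_mul_of_nonneg_left (key t) (hμ t)

lemma fA_eval (n : ℕ) (a : ℝ) (ε : Fin n → Bool) :
    eval (bvtx n ε) (fA n a) = (a-1) * (∏ i, (if ε i then (1:ℝ) else 0)) + 1 := by
  unfold fA
  rw [map_add, map_one, map_mul, eval_C, map_prod]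
  congr 2
  refine Finset.prod_congr rfl fun i _ => ?_
  rw [map_mul, eval_C, map_add, eval_X, map_one]
  by_cases h : ε i <;> simp [bvtx, h] <;> norm_num

lemma fA_eval_e (n : ℕ) (a : ℝ) :
    eval (bvtx n (fun _ => true)) (fA n a) = a := by
  rw [fA_eval]
  simp

lemma fA_eval_ne (n : ℕ) (a : ℝ) (ε : Fin n → Bool) (h : ε ≠ fun _ => true) :
    eval (bvtx n ε) (fA n a) = 1 := by
  rw [fA_eval]
  have : ∃ i, ε i = false := by
    by_contra hc
    push_neg at hc
    exact h (funext fun i => by simpa using hc i)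
  obtain ⟨i, hi⟩ := this
  rw [Finset.prod_eq_zero (mem_univ i) (by simp [hi])]
  ring

/-- For `n ≥ 3`, if `f_a = s₀ + Σ_k s_k ℓ_k` holds at every point
of `{−1,1}ⁿ`, where `s₀, s₁,…,s_K` are SONCs and `ℓ_k(x) = 1 + c_k + σ_k x_{i_k}`
with `c_k ≥ 0` and `σ_k ∈ {−1,1}`, then `a ≤ (2ⁿ − 1)/(2^{n−2} − 1)`. -/
theorem putinar_representation_bounds_a
    (n : ℕ) (hn : 3 ≤ n) (a : ℝ) (K : ℕ)
    (s₀ : MvPolynomial (Fin n) ℝ) (hs₀ : IsSONC n s₀)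
    (s : Fin K → MvPolynomial (Fin n) ℝ) (hs : ∀ k, IsSONC n (s k))
    (c : Fin K → ℝ) (hc : ∀ k, 0 ≤ c k)
    (σ : Fin K → ℝ) (hσ : ∀ k, σ k = 1 ∨ σ k = -1)
    (idx : Fin K → Fin n)
    (heq : ∀ ε : Fin n → Bool,
      eval (bvtx n ε) (fA n a) =
        eval (bvtx n ε) s₀ +
          ∑ k, eval (bvtx n ε) (s k) * (1 + c k + σ k * bvtx n ε (idx k))) :
    a ≤ ((2 : ℝ) ^ n - 1) / ((2 : ℝ) ^ (n - 2) - 1) := by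
  classical
  set e : Fin n → Bool := fun _ => true with he
  have hi0 : (0:ℕ) < n := by omega
  set M : ℝ := (2:ℝ)^(n-2) - 1 with hM
  have hMpos : 0 < M := by
    have h1 : (2:ℝ)^1 ≤ (2:ℝ)^(n-2) := by
      apply pow_le_pow_right₀ (by norm_num) (by omega)
    rw [hM]
    rw [pow_one] at h1
    linarith
  have key0 : M * (eval (bvtx n e) s₀ * 1) ≤
      ∑ ε ∈ (univ : Finset (Fin n → Bool)).erase e, eval (bvtx n ε) s₀ * 1 :=
    sonc_key n hn s₀ hs₀ (fun _ => 1) (fun _ => zero_le_one) ⟨0, hi0⟩ (fun _ _ => rfl)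
  simp only [mul_one] at key0
  have keyk : ∀ k, M * (eval (bvtx n e) (s k) * (1 + c k + σ k * bvtx n e (idx k)))
      ≤ ∑ ε ∈ (univ : Finset (Fin n → Bool)).erase e,
          eval (bvtx n ε) (s k) * (1 + c k + σ k * bvtx n ε (idx k)) := by
    intro k
    refine sonc_key n hn (s k) (hs k)
      (fun ε => 1 + c k + σ k * bvtx n ε (idx k)) ?_ (idx k) ?_
    · intro ε
      show 0 ≤ 1 + c k + σ k * bvtx n ε (idx k)
      have hb : bvtx n ε (idx k) = 1 ∨ bvtx n ε (idx k) = -1 := by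
        unfold bvtx
        by_cases h : ε (idx k) <;> simp [h]
      have hck := hc k
      rcases hσ k with h1 | h1 <;> rcases hb with h2 | h2 <;> rw [h1, h2] <;> linarith
    · intro ε hε
      show 1 + c k + σ k * bvtx n ε (idx k)
          = 1 + c k + σ k * bvtx n (fun _ => true) (idx k)
      rw [show bvtx n ε (idx k) = bvtx n (fun _ => true) (idx k) from by
        unfold bvtx; rw [hε]]
  have main : M * eval (bvtx n e) (fA n a) ≤
      ∑ ε ∈ (univ : Finset (Fin n → Bool)).erase e, eval (bvtx n ε) (fA n a) := by
    calc M * eval (bvtx n e) (fA n a)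
        = M * eval (bvtx n e) s₀ +
            ∑ k, M * (eval (bvtx n e) (s k) * (1 + c k + σ k * bvtx n e (idx k))) := by
          rw [heq e, mul_add, Finset.mul_sum]
      _ ≤ (∑ ε ∈ (univ : Finset (Fin n → Bool)).erase e, eval (bvtx n ε) s₀) +
            ∑ k, ∑ ε ∈ (univ : Finset (Fin n → Bool)).erase e,
              eval (bvtx n ε) (s k) * (1 + c k + σ k * bvtx n ε (idx k)) :=
          add_le_add key0 (Finset.sum_le_sum fun k _ => keyk k)
      _ = ∑ ε ∈ (univ : Finset (Fin n → Bool)).erase e, (eval (bvtx n ε) s₀ +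
            ∑ k, eval (bvtx n ε) (s k) * (1 + c k + σ k * bvtx n ε (idx k))) := by
          rw [show (∑ k, ∑ ε ∈ (univ : Finset (Fin n → Bool)).erase e,
              eval (bvtx n ε) (s k) * (1 + c k + σ k * bvtx n ε (idx k)))
            = ∑ ε ∈ (univ : Finset (Fin n → Bool)).erase e,
              ∑ k, eval (bvtx n ε) (s k) * (1 + c k + σ k * bvtx n ε (idx k))
            from Finset.sum_comm, ← Finset.sum_add_distrib]
      _ = _ := Finset.sum_congr rfl fun ε _ => (heq ε).symm
  have hFe : eval (bvtx n e) (fA n a) = a := fA_eval_e n a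
  have hsum1 : ∑ ε ∈ (univ : Finset (Fin n → Bool)).erase e, eval (bvtx n ε) (fA n a)
      = (((univ : Finset (Fin n → Bool)).erase e).card : ℝ) := by
    rw [Finset.sum_congr rfl
        (fun ε hε => fA_eval_ne n a ε (Finset.mem_erase.1 hε).1),
      Finset.sum_const, nsmul_eq_mul, mul_one]
  have hcarde : ((univ : Finset (Fin n → Bool)).erase e).card = 2^n - 1 := by
    rw [Finset.card_erase_of_mem (mem_univ e), Finset.card_univ]
    simp
  have h2n : (1:ℕ) ≤ 2^n := Nat.one_le_two_pow
  have main2 : M * a ≤ (2:ℝ)^n - 1 := by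
    rw [← hFe]
    refine le_trans main ?_
    rw [hsum1, hcarde]
    rw [Nat.cast_sub h2n]
    push_cast
    linarith
  rw [le_div_iff₀ hMpos]
  linarith [main2]
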